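/- Let F : ℝ^{nd} → ℝ be differentiable, L-smooth and μ-strongly convex; let G_1,…,G_m : ℝ^{nd} → ℝ be convex and c-Lipschitz, G = ∑_j G_j, H = F + G. Fix α > 0, β = mα, x ∈ ℝ^{nd}, and set z = x − α·∇F(x). Then for every y ∈ ℝ^{nd}: (1/m)·∑_{j=1}^m ‖prox_{βG_j}(z) − y‖² ≤ (1 − αμ + 3α²L²)·‖x − y‖² − 2α·(H(x) − H(y)) + (3m²c² + 2m·‖∇F(y)‖·c + 2‖∇F(y)‖²)·α². -/

import Mathlib

open scoped RealInnerProductSpace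
lemma prox_subgrad {N : ℕ} (β : ℝ) (hβ : 0 < β) (G : EuclideanSpace ℝ (Fin N) → ℝ)
    (hG : ConvexOn ℝ Set.univ G) (z p : EuclideanSpace ℝ (Fin N))
    (hp : IsMinOn (fun u => G u + (1 / (2 * β)) * ‖z - u‖ ^ 2) Set.univ p)
    (u : EuclideanSpace ℝ (Fin N)) :
    ⟪z - p, u - p⟫ ≤ β * (G u - G p) := by
  set I := ⟪z - p, u - p⟫ with hI
  set X := ‖u - p‖ ^ 2 with hX
  have hXnn : 0 ≤ X := by positivity
  have key : ∀ t : ℝ, 0 < t → t ≤ 1 → I ≤ β * (G u - G p) + (t / 2) * X := by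
    intro t ht ht1
    set q := p + t • (u - p) with hq
    have hmin : G p + (1/(2*β)) * ‖z - p‖^2 ≤ G q + (1/(2*β)) * ‖z - q‖^2 :=
      isMinOn_iff.mp hp q (Set.mem_univ q)
    have hconv : G q ≤ (1 - t) * G p + t * G u := by
      have h := hG.2 (Set.mem_univ p) (Set.mem_univ u)
        (by linarith : (0:ℝ) ≤ 1 - t) ht.le (by ring)
      have hqe : (1 - t) • p + t • u = q := by rw [hq]; module
      rwa [hqe] at h
    have hnorm : ‖z - q‖^2 = ‖z - p‖^2 - 2*t*I + t^2 * X := by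
      have h1 : z - q = (z - p) - t • (u - p) := by rw [hq]; module
      rw [h1, norm_sub_sq_real, real_inner_smul_right, norm_smul, Real.norm_eq_abs,
        abs_of_pos ht, mul_pow, hI, hX]
      ring
    rw [hnorm] at hmin
    have hβne : β ≠ 0 := ne_of_gt hβ
    have e1 : 2*β*(G p + (1/(2*β)) * ‖z - p‖^2) = 2*β*G p + ‖z - p‖^2 := by
      field_simp
    have e2 : 2*β*(G q + (1/(2*β)) * (‖z - p‖^2 - 2*t*I + t^2 * X))
        = 2*β*G q + (‖z - p‖^2 - 2*t*I + t^2 * X) := by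
      field_simp
    have h2 := mul_le_mul_of_nonneg_left hmin (by positivity : (0:ℝ) ≤ 2*β)
    rw [e1, e2] at h2
    have h5 : t * (2*β*(G p - G u) + 2*I) ≤ t * (t * X) := by nlinarith [hconv, h2]
    have h6 := le_of_mul_le_mul_left h5 ht
    linarith
  by_contra hcon
  push_neg at hcon
  rcases eq_or_lt_of_le hXnn with hX0 | hX0
  · have h := key 1 one_pos le_rfl
    rw [← hX0] at h
    linarith
  · set ε := I - β * (G u - G p) with hε
    have hεpos : 0 < ε := by simp only [hε]; linarith
    have ht : 0 < min 1 (ε / X) := lt_min one_pos (div_pos hεpos hX0)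
    have h := key _ ht (min_le_left _ _)
    have hlt : (min 1 (ε / X) / 2) * X < ε := by
      have h1 : min 1 (ε / X) ≤ ε / X := min_le_right _ _
      have h2 : (min 1 (ε/X)) * X ≤ ε := by
        calc (min 1 (ε/X)) * X ≤ (ε/X) * X := mul_le_mul_of_nonneg_right h1 hXnn
          _ = ε := by field_simp
      nlinarith
    linarith

set_option maxHeartbeats 1000000 in
theorem expected_descent_strongly_convex
    (N m : ℕ) (hm : 0 < m) (c L μ : ℝ) (hc : 0 ≤ c) (hL : 0 < L) (hμ : 0 < μ)
    (F : EuclideanSpace ℝ (Fin N) → ℝ)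
    (gradF : EuclideanSpace ℝ (Fin N) → EuclideanSpace ℝ (Fin N))
    (hdiff : ∀ x, HasGradientAt F (gradF x) x)
    (hlip : ∀ x y, ‖gradF x - gradF y‖ ≤ L * ‖x - y‖)
    (hsc : ∀ x y, F x + ⟪gradF x, y - x⟫ + (μ / 2) * ‖y - x‖ ^ 2 ≤ F y)
    (Gj : Fin m → EuclideanSpace ℝ (Fin N) → ℝ)
    (hGconv : ∀ j, ConvexOn ℝ Set.univ (Gj j))
    (hGlip : ∀ j, LipschitzWith c.toNNReal (Gj j))
    (α : ℝ) (hα : 0 < α)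
    (x z : EuclideanSpace ℝ (Fin N)) (hz : z = x - α • gradF x)
    (p : Fin m → EuclideanSpace ℝ (Fin N))
    (hp : ∀ j, IsMinOn (fun u => Gj j u + (1 / (2 * ((m : ℝ) * α))) * ‖z - u‖ ^ 2)
      Set.univ (p j))
    (y : EuclideanSpace ℝ (Fin N)) :
    (1 / (m : ℝ)) * ∑ j, ‖p j - y‖ ^ 2
      ≤ (1 - α * μ + 3 * α ^ 2 * L ^ 2) * ‖x - y‖ ^ 2
        - 2 * α * ((F x + ∑ j, Gj j x) - (F y + ∑ j, Gj j y))
        + (3 * (m : ℝ) ^ 2 * c ^ 2 + 2 * m * ‖gradF y‖ * c + 2 * ‖gradF y‖ ^ 2) * α ^ 2 := by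
  have hm' : (0:ℝ) < m := by exact_mod_cast hm
  have hβ : (0:ℝ) < (m:ℝ) * α := by positivity
  -- Lipschitz bound on each Gj
  have hlipG : ∀ j (a b : EuclideanSpace ℝ (Fin N)), Gj j a - Gj j b ≤ c * ‖a - b‖ := by
    intro j a b
    have h := (hGlip j).dist_le_mul a b
    rw [Real.dist_eq, Real.coe_toNNReal c hc, dist_eq_norm] at h
    calc Gj j a - Gj j b ≤ |Gj j a - Gj j b| := le_abs_self _
      _ ≤ c * ‖a - b‖ := h
  have hsub : ∀ j u, ⟪z - p j, u - p j⟫ ≤ ((m:ℝ)*α) * (Gj j u - Gj j (p j)) := fun j u =>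
    prox_subgrad ((m:ℝ)*α) hβ (Gj j) (hGconv j) z (p j) (hp j) u
  -- prox step is short
  have hzp : ∀ j, ‖z - p j‖ ≤ ((m:ℝ)*α) * c := by
    intro j
    have h := hsub j z
    rw [real_inner_self_eq_norm_sq] at h
    have h2 : Gj j z - Gj j (p j) ≤ c * ‖z - p j‖ := hlipG j z (p j)
    rcases eq_or_lt_of_le (norm_nonneg (z - p j)) with h0 | h0
    · rw [← h0]; positivity
    · nlinarith
  have hxz : x - z = α • gradF x := by rw [hz]; module
  have hxznorm : ‖x - z‖ = α * ‖gradF x‖ := by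
    rw [hxz, norm_smul, Real.norm_eq_abs, abs_of_pos hα]
  have hxp : ∀ j, ‖x - p j‖ ≤ α * ‖gradF x‖ + ((m:ℝ)*α) * c := by
    intro j
    calc ‖x - p j‖ ≤ ‖x - z‖ + ‖z - p j‖ := by
          have h1 : x - p j = (x - z) + (z - p j) := by module
          rw [h1]; exact norm_add_le _ _
      _ ≤ _ := by rw [hxznorm]; linarith [hzp j]
  -- per-coordinate inequality
  have hper : ∀ j, ‖p j - y‖^2 ≤ ‖z - y‖^2 + 2*((m:ℝ)*α)*(Gj j y - Gj j x)
      + 2*((m:ℝ)*α)*c*(α*‖gradF x‖ + ((m:ℝ)*α)*c) := by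
    intro j
    have hid : ‖p j - y‖^2 = ‖z - y‖^2 - ‖z - p j‖^2 + 2*⟪z - p j, y - p j⟫ := by
      have h1 : p j - y = (z - y) - (z - p j) := by module
      have h2 : y - p j = (z - p j) - (z - y) := by module
      rw [h1, h2, norm_sub_sq_real, inner_sub_right (𝕜 := ℝ) (z - p j) (z - p j) (z - y),
        real_inner_self_eq_norm_sq, real_inner_comm (z - y) (z - p j)]
      ring
    have h3 := hsub j y
    have h5 : Gj j x - Gj j (p j) ≤ c * ‖x - p j‖ := hlipG j x (p j)
    have h6 : c * ‖x - p j‖ ≤ c * (α*‖gradF x‖ + ((m:ℝ)*α)*c) :=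
      mul_le_mul_of_nonneg_left (hxp j) hc
    have h7 : (0:ℝ) ≤ ‖z - p j‖^2 := by positivity
    nlinarith [mul_le_mul_of_nonneg_left h5 hβ.le, mul_le_mul_of_nonneg_left h6 hβ.le]
  -- sum it up
  have hsum : ∑ j, ‖p j - y‖ ^ 2
      ≤ (m:ℝ) * (‖z - y‖^2 + 2*((m:ℝ)*α)*c*(α*‖gradF x‖ + ((m:ℝ)*α)*c))
        + 2*((m:ℝ)*α)*((∑ j, Gj j y) - ∑ j, Gj j x) := by
    calc ∑ j, ‖p j - y‖ ^ 2
        ≤ ∑ j : Fin m, (‖z - y‖^2 + 2*((m:ℝ)*α)*(Gj j y - Gj j x)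
            + 2*((m:ℝ)*α)*c*(α*‖gradF x‖ + ((m:ℝ)*α)*c)) :=
          Finset.sum_le_sum fun j _ => hper j
      _ = _ := by
          rw [Finset.sum_add_distrib, Finset.sum_add_distrib, Finset.sum_const,
            Finset.sum_const, Finset.card_univ, Fintype.card_fin, nsmul_eq_mul,
            nsmul_eq_mul, ← Finset.mul_sum, Finset.sum_sub_distrib]
          ring
  have h1 : (1/(m:ℝ)) * ∑ j, ‖p j - y‖ ^ 2
      ≤ ‖z - y‖^2 + 2*((m:ℝ)*α)*c*(α*‖gradF x‖ + ((m:ℝ)*α)*c)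
        + 2*α*((∑ j, Gj j y) - ∑ j, Gj j x) := by
    have h2 := mul_le_mul_of_nonneg_left hsum (by positivity : (0:ℝ) ≤ 1/(m:ℝ))
    have e3 : (1/(m:ℝ)) * ((m:ℝ) * (‖z - y‖^2 + 2*((m:ℝ)*α)*c*(α*‖gradF x‖ + ((m:ℝ)*α)*c))
        + 2*((m:ℝ)*α)*((∑ j, Gj j y) - ∑ j, Gj j x))
        = ‖z - y‖^2 + 2*((m:ℝ)*α)*c*(α*‖gradF x‖ + ((m:ℝ)*α)*c)
          + 2*α*((∑ j, Gj j y) - ∑ j, Gj j x) := by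
      field_simp
    linarith [h2, e3]
  -- expansion of ‖z - y‖²
  have hzy : ‖z - y‖^2 = ‖x - y‖^2 - 2*α*⟪gradF x, x - y⟫ + α^2 * ‖gradF x‖^2 := by
    have h1 : z - y = (x - y) - α • gradF x := by rw [hz]; module
    rw [h1, norm_sub_sq_real, real_inner_smul_right, norm_smul, Real.norm_eq_abs,
      abs_of_pos hα, real_inner_comm (x - y) (gradF x), mul_pow]
    ring
  -- strong convexity
  have hsc' : F x - F y + (μ/2)*‖x - y‖^2 ≤ ⟪gradF x, x - y⟫ := by
    have h := hsc x y
    have h2 : ⟪gradF x, y - x⟫ = -⟪gradF x, x - y⟫ := by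
      rw [show y - x = -(x - y) by abel, inner_neg_right]
    rw [h2, norm_sub_rev y x] at h
    linarith
  -- gradient bound
  have he : ‖gradF x‖ ≤ L*‖x - y‖ + ‖gradF y‖ := by
    have h := hlip x y
    calc ‖gradF x‖ = ‖(gradF x - gradF y) + gradF y‖ := by rw [sub_add_cancel]
      _ ≤ ‖gradF x - gradF y‖ + ‖gradF y‖ := norm_add_le _ _
      _ ≤ _ := by linarith
  have he2 : ‖gradF x‖^2 ≤ 2*L^2*‖x - y‖^2 + 2*‖gradF y‖^2 := by
    nlinarith [mul_nonneg (sub_nonneg.2 he) (norm_nonneg (gradF x)),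
      mul_nonneg (sub_nonneg.2 he)
        (by positivity : (0:ℝ) ≤ L*‖x - y‖ + ‖gradF y‖),
      sq_nonneg (L*‖x - y‖ - ‖gradF y‖)]
  have he3 : 2*c*(m:ℝ)*‖gradF x‖ ≤ (m:ℝ)^2*c^2 + L^2*‖x - y‖^2 + 2*(m:ℝ)*c*‖gradF y‖ := by
    nlinarith [mul_nonneg (mul_nonneg hc hm'.le) (sub_nonneg.2 he),
      sq_nonneg ((m:ℝ)*c - L*‖x - y‖)]
  have hkey : ‖gradF x‖^2 + 2*c*(m:ℝ)*‖gradF x‖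
      ≤ 3*L^2*‖x - y‖^2 + (m:ℝ)^2*c^2 + 2*(m:ℝ)*c*‖gradF y‖ + 2*‖gradF y‖^2 := by
    linarith
  have hA := mul_le_mul_of_nonneg_left hsc' (by positivity : (0:ℝ) ≤ 2*α)
  have hB := mul_le_mul_of_nonneg_left hkey (sq_nonneg α)
  linarith [h1, hzy, hA, hB]
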